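/- The odd resistance is the limit of shorted resistances: Let G be a network and let p ≠ q be vertices of G. Then odd_res(p,q) equals the supremum, over all finite vertex sets S containing p and q, of the short resistance R_short(p,q,S). -/
import Mathlib


open scoped ENNReal
open Filter

variable {V : Type*}

/-- A *flow* on a graph: an antisymmetric function on ordered pairs of vertices
that vanishes on non-adjacent pairs. -/
def IsFlow (G : SimpleGraph V) (θ : V → V → ℝ) : Prop :=
  (∀ u v, θ u v = -θ v u) ∧ ∀ u v, ¬G.Adj u v → θ u v = 0

/-- The divergence (source strength) of a flow at a vertex. -/
noncomputable def divg (G : SimpleGraph V) [G.LocallyFinite] (θ : V → V → ℝ) (v : V) : ℝ :=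
  ∑ u ∈ G.neighborFinset v, θ v u

/-- The energy `(1/2) ∑ r(u,v) θ(u,v)²` dissipated by a flow, valued in `[0,∞]`. -/
noncomputable def energy (r θ : V → V → ℝ) : ℝ≥0∞ :=
  2⁻¹ * ∑' p : V × V, ENNReal.ofReal (r p.1 p.2 * θ p.1 p.2 ^ 2)

open Classical in
/-- The source distribution with a unit source at `p` and a unit sink at `q`. -/
noncomputable def pointSource (p q v : V) : ℝ :=
  if v = p then 1 else if v = q then -1 else 0

/-- The odd resistance: the infimum of the energy over all finite-energy unit
flows from `p` to `q`. -/
noncomputable def oddRes (G : SimpleGraph V) [G.LocallyFinite] (r : V → V → ℝ)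
    (p q : V) : ℝ≥0∞ :=
  ⨅ (θ : V → V → ℝ) (_ : IsFlow G θ ∧ energy r θ ≠ ⊤ ∧ divg G θ = pointSource p q),
    energy r θ

/-- The cut resistance: the infimum of the energy over all unit flows from `p` to `q`
vanishing on every edge with an endpoint outside `S`. -/
noncomputable def cutRes (G : SimpleGraph V) [G.LocallyFinite] (r : V → V → ℝ)
    (p q : V) (S : Finset V) : ℝ≥0∞ :=
  ⨅ (θ : V → V → ℝ) (_ : IsFlow G θ ∧ divg G θ = pointSource p q ∧
      ∀ u v, (u ∉ S ∨ v ∉ S) → θ u v = 0), energy r θ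

/-- The even resistance: the infimum of the cut resistances over all finite
vertex sets containing `p` and `q`. -/
noncomputable def evenRes (G : SimpleGraph V) [G.LocallyFinite] (r : V → V → ℝ)
    (p q : V) : ℝ≥0∞ :=
  ⨅ (S : Finset V) (_ : p ∈ S ∧ q ∈ S), cutRes G r p q S

/-- The short resistance: the infimum of the energy over all antisymmetric edge
functions supported on edges with at least one endpoint in `S` whose divergence
at every vertex of `S` is that of a unit flow from `p` to `q`. -/
noncomputable def shortRes (G : SimpleGraph V) [G.LocallyFinite] (r : V → V → ℝ)
    (p q : V) (S : Finset V) : ℝ≥0∞ :=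
  ⨅ (θ : V → V → ℝ) (_ : (∀ u v, θ u v = -θ v u) ∧ (∀ u v, ¬G.Adj u v → θ u v = 0) ∧
      (∀ u v, u ∉ S → v ∉ S → θ u v = 0) ∧
      ∀ v ∈ S, divg G θ v = pointSource p q v), energy r θ

/-- A function on the vertices of a network is harmonic if the net current it
induces out of each vertex is zero. -/
def Harmonic (G : SimpleGraph V) [G.LocallyFinite] (r : V → V → ℝ) (u : V → ℝ) : Prop :=
  ∀ v, ∑ w ∈ G.neighborFinset v, (u v - u w) / r v w = 0

open Classical in
/-- The Dirichlet energy `(1/2) ∑ (u(v)-u(w))²/r(v,w)` of a function on the vertices. -/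
noncomputable def fnEnergy (G : SimpleGraph V) (r : V → V → ℝ) (u : V → ℝ) : ℝ≥0∞ :=
  2⁻¹ * ∑' p : V × V,
    if G.Adj p.1 p.2 then ENNReal.ofReal ((u p.1 - u p.2) ^ 2 / r p.1 p.2) else 0

lemma countable_of_connected (G : SimpleGraph V) [G.LocallyFinite] (hG : G.Connected) :
    Countable V := by
  obtain ⟨p⟩ := hG.nonempty
  have hB : ∀ n : ℕ, {v : V | ∃ w : G.Walk v p, w.length ≤ n}.Finite := by
    intro n
    induction n with
    | zero =>
      apply Set.Finite.subset (Set.finite_singleton p)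
      rintro v ⟨w, hw⟩
      have : w.length = 0 := Nat.le_zero.mp hw
      simp [SimpleGraph.Walk.eq_of_length_eq_zero this]
    | succ n ih =>
      apply Set.Finite.subset (ih.union (Set.Finite.biUnion ih
        (fun u _ => (G.neighborSet u).toFinite)))
      rintro v ⟨w, hw⟩
      cases w with
      | nil => exact Or.inl ⟨SimpleGraph.Walk.nil, Nat.zero_le _⟩
      | cons h w' =>
        rename_i mid
        right
        exact Set.mem_biUnion (⟨w', by simpa using hw⟩ :
          mid ∈ {v : V | ∃ w : G.Walk v p, w.length ≤ n}) h.symm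
  have huniv : (Set.univ : Set V).Countable := by
    have hU : (Set.univ : Set V) = ⋃ n : ℕ, {v : V | ∃ w : G.Walk v p, w.length ≤ n} := by
      ext v
      simp only [Set.mem_univ, Set.mem_iUnion, true_iff, Set.mem_setOf_eq]
      obtain ⟨w⟩ := hG v p
      exact ⟨w.length, w, le_rfl⟩
    rw [hU]
    exact Set.countable_iUnion fun n => (hB n).countable
  exact Set.countable_univ_iff.mp huniv

lemma energy_le_of_tendsto (r : V → V → ℝ) (θs : ℕ → V → V → ℝ) (θ : V → V → ℝ) (c : ℝ≥0∞)
    (hc : ∀ n, energy r (θs n) ≤ c)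
    (hlim : ∀ u v, Tendsto (fun n => θs n u v) atTop (nhds (θ u v))) :
    energy r θ ≤ c := by
  have key : (∑' e : V × V, ENNReal.ofReal (r e.1 e.2 * θ e.1 e.2 ^ 2)) ≤ 2 * c := by
    rw [ENNReal.tsum_eq_iSup_sum]
    refine iSup_le fun F => ?_
    have hF : ∀ n, (∑ e ∈ F, ENNReal.ofReal (r e.1 e.2 * θs n e.1 e.2 ^ 2)) ≤ 2 * c := by
      intro n
      refine le_trans (ENNReal.sum_le_tsum F) ?_
      have h := hc n
      rw [energy] at h
      calc (∑' e : V × V, ENNReal.ofReal (r e.1 e.2 * θs n e.1 e.2 ^ 2))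
          = 2 * (2⁻¹ * ∑' e : V × V, ENNReal.ofReal (r e.1 e.2 * θs n e.1 e.2 ^ 2)) := by
            rw [← mul_assoc, ENNReal.mul_inv_cancel two_ne_zero ENNReal.ofNat_ne_top, one_mul]
        _ ≤ 2 * c := mul_le_mul_right h 2
    have hlimF : Tendsto (fun n => ∑ e ∈ F, ENNReal.ofReal (r e.1 e.2 * θs n e.1 e.2 ^ 2))
        atTop (nhds (∑ e ∈ F, ENNReal.ofReal (r e.1 e.2 * θ e.1 e.2 ^ 2))) := by
      refine tendsto_finset_sum _ fun e _ => ?_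
      exact (ENNReal.continuous_ofReal.tendsto _).comp
        (((hlim e.1 e.2).pow 2).const_mul _)
    exact le_of_tendsto hlimF (Eventually.of_forall hF)
  rw [energy]
  calc 2⁻¹ * (∑' e : V × V, ENNReal.ofReal (r e.1 e.2 * θ e.1 e.2 ^ 2))
      ≤ 2⁻¹ * (2 * c) := mul_le_mul_right key _
    _ = c := by rw [← mul_assoc, ENNReal.inv_mul_cancel two_ne_zero ENNReal.ofNat_ne_top, one_mul]


/-- **The odd resistance is the limit of shorted resistances**: it is the supremum of the
short resistances `R_short(p,q,S)` over all finite vertex sets `S` containing `p` and `q`. -/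
theorem oddRes_eq_iSup_shortRes
    (G : SimpleGraph V) [G.LocallyFinite] (hG : G.Connected)
    (r : V → V → ℝ) (hr_pos : ∀ u v, G.Adj u v → 0 < r u v)
    (hr_symm : ∀ u v, r u v = r v u)
    (p q : V) (hpq : p ≠ q) :
    oddRes G r p q = ⨆ (S : Finset V) (_ : p ∈ S ∧ q ∈ S), shortRes G r p q S := by
  classical
  refine le_antisymm ?_ ?_
  · -- oddRes ≤ sup
    set M := ⨆ (S : Finset V) (_ : p ∈ S ∧ q ∈ S), shortRes G r p q S with hMdef
    rcases eq_top_or_lt_top M with htop | hMlt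
    · rw [htop]; exact le_top
    refine ENNReal.le_of_forall_pos_le_add fun ε hε _ => ?_
    haveI : Countable V := countable_of_connected G hG
    haveI : Nonempty V := ⟨p⟩
    obtain ⟨en, hen⟩ := exists_surjective_nat V
    set Sn : ℕ → Finset V := fun n => insert p (insert q ((Finset.range n).image en)) with hSn
    have hpS : ∀ n, p ∈ Sn n := fun n => Finset.mem_insert_self _ _
    have hqS : ∀ n, q ∈ Sn n := fun n => Finset.mem_insert_of_mem (Finset.mem_insert_self _ _)
    have hcover : ∀ v : V, ∃ N, ∀ n ≥ N, v ∈ Sn n := by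
      intro v
      obtain ⟨k, rfl⟩ := hen v
      exact ⟨k + 1, fun n hn => Finset.mem_insert_of_mem (Finset.mem_insert_of_mem
        (Finset.mem_image_of_mem en (Finset.mem_range.mpr (lt_of_lt_of_le (Nat.lt_succ_self k) hn))))⟩
    have hMεtop : M + ε ≠ ⊤ := by
      exact ENNReal.add_ne_top.mpr ⟨hMlt.ne, ENNReal.coe_ne_top⟩
    have hMε : M < M + ε := ENNReal.lt_add_right hMlt.ne (by exact_mod_cast hε.ne')
    have hsel : ∀ n : ℕ, ∃ θ : V → V → ℝ,
        ((∀ u v, θ u v = -θ v u) ∧ (∀ u v, ¬G.Adj u v → θ u v = 0) ∧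
          (∀ u v, u ∉ Sn n → v ∉ Sn n → θ u v = 0) ∧
          ∀ v ∈ Sn n, divg G θ v = pointSource p q v) ∧ energy r θ < M + ε := by
      intro n
      have h1 : shortRes G r p q (Sn n) < M + ε :=
        lt_of_le_of_lt (le_iSup₂_of_le (Sn n) ⟨hpS n, hqS n⟩ le_rfl) hMε
      rw [shortRes, iInf_lt_iff] at h1
      obtain ⟨θ, hθ⟩ := h1
      rw [iInf_lt_iff] at hθ
      obtain ⟨hA, hE⟩ := hθ
      exact ⟨θ, hA, hE⟩
    choose θn hA hE using hsel
    set TT : ℝ≥0∞ := 2 * (M + ε) with hTT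
    have hTTtop : TT ≠ ⊤ := ENNReal.mul_ne_top ENNReal.ofNat_ne_top hMεtop
    set B : ℝ := TT.toReal with hB
    have htsum_le : ∀ n, (∑' e : V × V, ENNReal.ofReal (r e.1 e.2 * θn n e.1 e.2 ^ 2)) ≤ TT := by
      intro n
      have h := (hE n).le
      rw [energy] at h
      calc (∑' e : V × V, ENNReal.ofReal (r e.1 e.2 * θn n e.1 e.2 ^ 2))
          = 2 * (2⁻¹ * ∑' e : V × V, ENNReal.ofReal (r e.1 e.2 * θn n e.1 e.2 ^ 2)) := by
            rw [← mul_assoc, ENNReal.mul_inv_cancel two_ne_zero ENNReal.ofNat_ne_top, one_mul]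
        _ ≤ 2 * (M + ε) := mul_le_mul_right h 2
    set C : V × V → ℝ := fun e => if G.Adj e.1 e.2 then Real.sqrt (B / r e.1 e.2) else 0 with hC
    have hmem : ∀ n, (fun e : V × V => θn n e.1 e.2) ∈ Set.univ.pi fun e => Set.Icc (-C e) (C e) := by
      intro n
      rw [Set.mem_univ_pi]
      intro e
      by_cases hadj : G.Adj e.1 e.2
      · have h1 : ENNReal.ofReal (r e.1 e.2 * θn n e.1 e.2 ^ 2) ≤ TT :=
          le_trans (ENNReal.le_tsum e) (htsum_le n)
        have h2 : r e.1 e.2 * θn n e.1 e.2 ^ 2 ≤ B := (ENNReal.ofReal_le_iff_le_toReal hTTtop).mp h1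
        have h3 : θn n e.1 e.2 ^ 2 ≤ B / r e.1 e.2 := by
          rw [le_div_iff₀ (hr_pos _ _ hadj)]
          linarith
        have h4 := Real.abs_le_sqrt h3
        rw [abs_le] at h4
        simpa [hC, hadj] using h4
      · have h0 : θn n e.1 e.2 = 0 := (hA n).2.1 _ _ hadj
        simp [hC, hadj, h0]
    obtain ⟨a, -, φ, hφ, hconv⟩ :=
      (isCompact_univ_pi fun e : V × V => isCompact_Icc).tendsto_subseq hmem
    have hptwise : ∀ u v : V, Tendsto (fun k => θn (φ k) u v) atTop (nhds (a (u, v))) :=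
      fun u v => tendsto_pi_nhds.mp hconv (u, v)
    set θL : V → V → ℝ := fun u v => a (u, v) with hθL
    have hanti : ∀ u v, θL u v = -θL v u := by
      intro u v
      refine tendsto_nhds_unique (hptwise u v) ?_
      exact ((hptwise v u).neg).congr fun k => ((hA (φ k)).1 u v).symm
    have hzero : ∀ u v, ¬G.Adj u v → θL u v = 0 := by
      intro u v h
      refine tendsto_nhds_unique (hptwise u v) ?_
      exact tendsto_const_nhds.congr fun k => ((hA (φ k)).2.1 u v h).symm
    have hdiv : divg G θL = pointSource p q := by
      funext v
      have hlimd : Tendsto (fun k => divg G (θn (φ k)) v) atTop (nhds (divg G θL v)) :=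
        tendsto_finset_sum _ fun u _ => hptwise v u
      obtain ⟨N, hN⟩ := hcover v
      have heq : ∀ᶠ k in atTop, divg G (θn (φ k)) v = pointSource p q v :=
        eventually_atTop.mpr ⟨N, fun k hk =>
          (hA (φ k)).2.2.2 v (hN _ (le_trans hk hφ.le_apply))⟩
      exact tendsto_nhds_unique (hlimd.congr' heq) tendsto_const_nhds
    have hEθ : energy r θL ≤ M + ε :=
      energy_le_of_tendsto r (fun k => θn (φ k)) θL (M + ε)
        (fun k => (hE (φ k)).le) hptwise
    calc oddRes G r p q ≤ energy r θL := by
          refine iInf₂_le θL ⟨⟨hanti, hzero⟩, ?_, hdiv⟩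
          exact (lt_of_le_of_lt hEθ (lt_top_iff_ne_top.mpr hMεtop)).ne
      _ ≤ M + ε := hEθ
  · -- sup ≤ oddRes
    refine iSup₂_le fun S hS => le_iInf₂ fun θ hθ => ?_
    obtain ⟨⟨hanti, hzero⟩, hfin, hdiv⟩ := hθ
    set θ' : V → V → ℝ := fun u v => if u ∈ S ∨ v ∈ S then θ u v else 0 with hθ'
    have hadm : (∀ u v, θ' u v = -θ' v u) ∧ (∀ u v, ¬G.Adj u v → θ' u v = 0) ∧
        (∀ u v, u ∉ S → v ∉ S → θ' u v = 0) ∧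
        ∀ v ∈ S, divg G θ' v = pointSource p q v := by
      refine ⟨?_, ?_, ?_, ?_⟩
      · intro u v
        by_cases h : u ∈ S ∨ v ∈ S
        · simp only [hθ', if_pos h, if_pos h.symm]
          exact hanti u v
        · have h' : ¬(v ∈ S ∨ u ∈ S) := fun hc => h hc.symm
          simp [hθ', h, h']
      · intro u v h
        by_cases h' : u ∈ S ∨ v ∈ S <;> simp [hθ', h', hzero u v h]
      · intro u v hu hv
        simp [hθ', hu, hv]
      · intro v hv
        have heq : ∀ u, θ' v u = θ v u := fun u => if_pos (Or.inl hv)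
        rw [divg]
        simp_rw [heq]
        exact congrFun hdiv v
    refine le_trans (iInf₂_le θ' hadm) ?_
    rw [energy, energy]
    refine mul_le_mul_right (ENNReal.tsum_le_tsum fun e => ?_) _
    by_cases h : e.1 ∈ S ∨ e.2 ∈ S
    · simp [hθ', h]
    · simp [hθ', h]
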